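/- Let s be uniform on [−c,−1), t uniform on (1,c] with c > 1, independent, and conditionally on (s,t) let X₁,...,X_n be i.i.d. uniform on [s,t] with n ≥ 3. Then P(X_i ∈ [−1,1] for all i) = (4 − 8(2/(1+c))^{n−2} + 4(1/c)^{n−2})/((c−1)²(n−1)(n−2)). -/

import Mathlib

open intervalIntegral


set_option maxHeartbeats 1000000 in
private theorem eventB2_alg (c : ℝ) (hc : 1 < c) (m : ℕ) :
    (1 / (c - 1)) ^ 2 * 2 ^ (m + 3) / (-(m:ℝ) - 2) *
      (((((c + c) ^ (m + 1))⁻¹ - ((c + 1) ^ (m + 1))⁻¹) / (-(m:ℝ) - 1))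
        - ((((1 + c) ^ (m + 1))⁻¹ - (((2:ℝ)) ^ (m + 1))⁻¹) / (-(m:ℝ) - 1)))
    = (4 - 8 * (2 / (1 + c)) ^ (m + 1) + 4 * (1 / c) ^ (m + 1)) /
        ((c - 1) ^ 2 * ((m:ℝ) + 3 - 1) * ((m:ℝ) + 3 - 2)) := by
  have h1 : c - 1 ≠ 0 := by linarith
  have h2 : (1:ℝ) + c ≠ 0 := by linarith
  have h3 : c ≠ 0 := by linarith
  have hmm : (0:ℝ) ≤ (m:ℝ) := Nat.cast_nonneg m
  have hm1 : (-(m:ℝ) - 2) ≠ 0 := by intro h; linarith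
  have hm2 : (-(m:ℝ) - 1) ≠ 0 := by intro h; linarith
  have h6 : ((1:ℝ) + c) ^ (m+1) ≠ 0 := pow_ne_zero _ h2
  have h7 : (c:ℝ) ^ (m+1) ≠ 0 := pow_ne_zero _ h3
  have h8 : ((2:ℝ)) ^ (m+1) ≠ 0 := pow_ne_zero _ two_ne_zero
  rw [show (m:ℝ) + 3 - 1 = (m:ℝ) + 2 by ring, show (m:ℝ) + 3 - 2 = (m:ℝ) + 1 by ring]
  rw [show c + c = 2 * c by ring, mul_pow, show c + 1 = 1 + c by ring,
    show (2:ℝ)^(m+3) = 4 * 2^(m+1) by rw [show m+3 = m+1+2 by omega, pow_add]; ring,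
    div_pow, one_div c, inv_pow]
  rw [div_pow 2 (1 + c)]
  field_simp
  ring

set_option maxHeartbeats 1000000 in
/-- Event B.2 probability for `n ≥ 3`: `s` uniform on `[−c,−1)`, `t` uniform on
`(1,c]` (each with density `1/(c−1)`), and conditionally on `(s,t)` the `n`
i.i.d. uniform samples on `[s,t]` all land in `[−1,1]` with probability
`(2/(t−s))^n`.  Integrating yields the stated closed form. -/
theorem eventB2_prob (c : ℝ) (hc : 1 < c) (n : ℕ) (hn : 3 ≤ n) :
    ∫ s in (-c)..(-1 : ℝ), ∫ t in (1 : ℝ)..c,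
        (1 / (c - 1)) ^ 2 * (2 / (t - s)) ^ n
      = (4 - 8 * (2 / (1 + c)) ^ (n - 2) + 4 * (1 / c) ^ (n - 2)) /
          ((c - 1) ^ 2 * ((n : ℝ) - 1) * ((n : ℝ) - 2)) := by
  obtain ⟨m, rfl⟩ : ∃ m, n = m + 3 := ⟨n - 3, by omega⟩
  have hc0 : (0:ℝ) < c := lt_trans one_pos hc
  set A : ℝ := (1 / (c - 1)) ^ 2 * 2 ^ (m + 3) with hA
  -- pointwise rewriting of the inner integrand
  have hpt : ∀ s t : ℝ, (1 / (c - 1)) ^ 2 * (2 / (t - s)) ^ (m + 3)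
      = A * ((t - s) ^ (-(m:ℤ) - 3)) := by
    intro s t
    rcases eq_or_ne (t - s) 0 with h | h
    · rw [h, div_zero, zero_pow (by omega), zero_zpow _ (by omega)]
      ring
    · rw [div_pow, show (-(m:ℤ) - 3) = -((m+3 : ℕ) : ℤ) by push_cast; ring,
        zpow_neg, zpow_natCast, hA]
      have h1 : c - 1 ≠ 0 := by linarith
      field_simp
      rw [← mul_pow, div_mul_cancel₀ _ h]
  -- inner integral for s in the range
  have huIcc : Set.uIcc (-c) (-1:ℝ) = Set.Icc (-c) (-1) :=
    Set.uIcc_of_le (by linarith)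
  have inner : ∀ s ∈ Set.uIcc (-c) (-1:ℝ),
      (∫ t in (1:ℝ)..c, (1 / (c - 1)) ^ 2 * (2 / (t - s)) ^ (m + 3))
      = A / (-(m:ℝ) - 2) * ((c - s) ^ (-(m:ℤ) - 2) - (1 - s) ^ (-(m:ℤ) - 2)) := by
    intro s hs
    rw [huIcc, Set.mem_Icc] at hs
    have hs1 : s ≤ -1 := hs.2
    have hside : (0:ℤ) ≤ -(m:ℤ) - 3 ∨ (-(m:ℤ) - 3 ≠ -1 ∧ (0:ℝ) ∉ Set.uIcc (1 - s) (c - s)) := by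
      refine Or.inr ⟨by omega, ?_⟩
      rw [Set.uIcc_of_le (by linarith), Set.mem_Icc]
      intro h
      linarith [h.1]
    calc (∫ t in (1:ℝ)..c, (1 / (c - 1)) ^ 2 * (2 / (t - s)) ^ (m + 3))
        = ∫ t in (1:ℝ)..c, A * ((t - s) ^ (-(m:ℤ) - 3)) := by
          simp only [hpt]
      _ = A * ∫ t in (1:ℝ)..c, ((t - s) ^ (-(m:ℤ) - 3)) := by
          rw [integral_const_mul]
      _ = A * ∫ u in (1 - s)..(c - s), (u ^ (-(m:ℤ) - 3)) := by
          rw [intervalIntegral.integral_comp_sub_right (fun u => u ^ (-(m:ℤ) - 3)) s]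
      _ = A * (((c - s) ^ (-(m:ℤ) - 3 + 1) - (1 - s) ^ (-(m:ℤ) - 3 + 1)) / (((-(m:ℤ) - 3 : ℤ) : ℝ) + 1)) := by
          rw [integral_zpow hside]
      _ = A / (-(m:ℝ) - 2) * ((c - s) ^ (-(m:ℤ) - 2) - (1 - s) ^ (-(m:ℤ) - 2)) := by
          rw [show (-(m:ℤ) - 3 + 1) = -(m:ℤ) - 2 by ring]
          push_cast
          ring
  rw [intervalIntegral.integral_congr inner]
  -- integrability of the two outer integrands
  have hI1 : IntervalIntegrable (fun s => (c - s) ^ (-(m:ℤ) - 2)) MeasureTheory.volume (-c) (-1) := by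
    apply ContinuousOn.intervalIntegrable
    apply ContinuousOn.zpow₀ (continuousOn_const.sub continuousOn_id)
    intro s hs
    rw [huIcc, Set.mem_Icc] at hs
    exact Or.inl (by intro h; simp only [Pi.sub_apply, id_eq, sub_eq_zero] at h; linarith [hs.2])
  have hI2 : IntervalIntegrable (fun s => (1 - s) ^ (-(m:ℤ) - 2)) MeasureTheory.volume (-c) (-1) := by
    apply ContinuousOn.intervalIntegrable
    apply ContinuousOn.zpow₀ (continuousOn_const.sub continuousOn_id)
    intro s hs
    rw [huIcc, Set.mem_Icc] at hs
    exact Or.inl (by intro h; simp only [Pi.sub_apply, id_eq, sub_eq_zero] at h; linarith [hs.2])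
  have h0a : (0:ℝ) ∉ Set.uIcc (c + 1) (c + c) := by
    rw [Set.uIcc_of_le (by linarith), Set.mem_Icc]
    intro h; linarith [h.1]
  have h0b : (0:ℝ) ∉ Set.uIcc (2:ℝ) (1 + c) := by
    rw [Set.uIcc_of_le (by linarith), Set.mem_Icc]
    intro h; linarith [h.1]
  calc (∫ s in (-c)..(-1:ℝ), A / (-(m:ℝ) - 2) * ((c - s) ^ (-(m:ℤ) - 2) - (1 - s) ^ (-(m:ℤ) - 2)))
      = A / (-(m:ℝ) - 2) * ((∫ s in (-c)..(-1:ℝ), (c - s) ^ (-(m:ℤ) - 2))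
          - (∫ s in (-c)..(-1:ℝ), (1 - s) ^ (-(m:ℤ) - 2))) := by
        rw [integral_const_mul, integral_sub hI1 hI2]
    _ = A / (-(m:ℝ) - 2) * ((∫ u in (c+1)..(c+c), u ^ (-(m:ℤ) - 2))
          - (∫ u in (2:ℝ)..(1+c), u ^ (-(m:ℤ) - 2))) := by
        rw [intervalIntegral.integral_comp_sub_left (fun u => u ^ (-(m:ℤ) - 2)) c,
          intervalIntegral.integral_comp_sub_left (fun u => u ^ (-(m:ℤ) - 2)) 1]
        norm_num
    _ = A / (-(m:ℝ) - 2) * ((((c+c) ^ (-(m:ℤ) - 1) - (c+1) ^ (-(m:ℤ) - 1)) / (-(m:ℝ) - 1))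
          - (((1+c) ^ (-(m:ℤ) - 1) - (2:ℝ) ^ (-(m:ℤ) - 1)) / (-(m:ℝ) - 1))) := by
        rw [integral_zpow (Or.inr ⟨by omega, h0a⟩), integral_zpow (Or.inr ⟨by omega, h0b⟩)]
        rw [show (-(m:ℤ) - 2 + 1) = -(m:ℤ) - 1 by ring]
        push_cast
        ring
    _ = (4 - 8 * (2 / (1 + c)) ^ (m + 3 - 2) + 4 * (1 / c) ^ (m + 3 - 2)) /
          ((c - 1) ^ 2 * (((m + 3 : ℕ) : ℝ) - 1) * (((m + 3 : ℕ) : ℝ) - 2)) := by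
        have hzc : ∀ x : ℝ, x ^ (-(m:ℤ) - 1) = (x ^ (m+1))⁻¹ := by
          intro x
          rw [show (-(m:ℤ) - 1) = -((m+1 : ℕ) : ℤ) by push_cast; ring, zpow_neg, zpow_natCast]
        rw [hzc, hzc, hzc, hzc, hA, show m + 3 - 2 = m + 1 by omega]
        push_cast
        exact eventB2_alg c hc m
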